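/- Let a > 0 be a real number. Then the sequence n ↦ E_{χ²_n}[u/(u+na)] converges to 1/(1+a) as n → ∞. Consequently, if S² = σ²U with U ~ χ²_n and a = τ²/σ² with σ², τ² > 0, the statistic S²/(S²+nτ²) is an asymptotically unbiased estimator of σ²/(σ²+τ²): lim_{n→∞} E[S²/(S²+nτ²)] = σ²/(σ²+τ²). -/

import Mathlib

open MeasureTheory ProbabilityTheory Filter

/-- The chi-square distribution with `m` degrees of freedom: the Gamma distribution
with shape `m/2` and rate `1/2`. -/
noncomputable def chiSq (m : ℕ) : Measure ℝ := gammaMeasure ((m : ℝ) / 2) (1 / 2)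

/-- Expectation of `f` under the chi-square distribution with `m` degrees of freedom. -/
noncomputable def chiSqExp (m : ℕ) (f : ℝ → ℝ) : ℝ := ∫ u, f u ∂(chiSq m)

open Real Set

lemma rpow_split {x : ℝ} (hx : 0 < x) (a : ℝ) (k : ℕ) :
    x ^ (a + k - 1) = x ^ (a - 1) * x ^ k := by
  rw [← Real.rpow_natCast x k, ← Real.rpow_add hx]
  congr 1
  ring

lemma pdf_mul_pow {a r : ℝ} (k : ℕ) {x : ℝ} (hx : 0 < x) :
    gammaPDFReal a r x * x ^ k
      = (r ^ a / Gamma a) * (x ^ (a + k - 1) * Real.exp (-(r * x))) := by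
  rw [gammaPDFReal, if_pos hx.le, rpow_split hx a k]
  ring

lemma aux_integrableOn {a r : ℝ} (ha : 0 < a) (hr : 0 < r) (k : ℕ) :
    IntegrableOn (fun x : ℝ => x ^ (a + k - 1) * Real.exp (-(r * x))) (Ioi 0) := by
  have h := integrableOn_rpow_mul_exp_neg_mul_rpow (s := a + k - 1) (p := 1) (b := r)
    (by have : (0:ℝ) ≤ k := Nat.cast_nonneg k; linarith) zero_lt_one hr
  apply h.congr_fun ?_ measurableSet_Ioi
  intro x hx
  simp only []
  rw [show x ^ (1:ℝ) = x from Real.rpow_one x]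
  ring_nf

lemma ae_ne_zero : ∀ᵐ x : ℝ, x ≠ 0 := by
  refine compl_mem_ae_iff.2 ?_
  exact measure_singleton 0

lemma integral_gammaMeasure {a r : ℝ} (ha : 0 < a) (hr : 0 < r) (g : ℝ → ℝ) :
    ∫ x, g x ∂(gammaMeasure a r) = ∫ x in Ioi 0, gammaPDFReal a r x * g x := by
  have hmeas : Measurable fun x => (gammaPDFReal a r x).toNNReal :=
    (measurable_gammaPDFReal a r).real_toNNReal
  have hd : gammaMeasure a r
      = volume.withDensity (fun x => ((gammaPDFReal a r x).toNNReal : ENNReal)) := rfl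
  rw [hd, integral_withDensity_eq_integral_smul hmeas, ← integral_indicator measurableSet_Ioi]
  apply integral_congr_ae
  filter_upwards [ae_ne_zero] with x hx
  rcases lt_or_gt_of_ne hx with h | h
  · have hpdf : gammaPDFReal a r x = 0 := by rw [gammaPDFReal, if_neg (not_le.2 h)]
    rw [indicator_of_notMem (by simpa using h.le), hpdf]
    simp
  · rw [indicator_of_mem (mem_Ioi.2 h)]
    rw [NNReal.smul_def, smul_eq_mul, Real.coe_toNNReal _ (gammaPDFReal_nonneg ha hr x)]

lemma integral_pow_gammaMeasure {a r : ℝ} (ha : 0 < a) (hr : 0 < r) (k : ℕ) :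
    ∫ x, x ^ k ∂(gammaMeasure a r) = Gamma (a + k) / Gamma a / r ^ k := by
  rw [integral_gammaMeasure ha hr]
  rw [setIntegral_congr_fun measurableSet_Ioi (g := fun x =>
      (r ^ a / Gamma a) * (x ^ (a + k - 1) * Real.exp (-(r * x))))
      (fun x hx => pdf_mul_pow k hx)]
  rw [integral_const_mul, integral_rpow_mul_exp_neg_mul_Ioi (by positivity) hr]
  have hG : Gamma a ≠ 0 := (Gamma_pos_of_pos ha).ne'
  rw [← Real.rpow_natCast r k, one_div, Real.inv_rpow hr.le, Real.rpow_add hr]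
  rw [mul_inv]
  field_simp [(Real.rpow_pos_of_pos hr a).ne']

lemma integrable_pow_gammaMeasure {a r : ℝ} (ha : 0 < a) (hr : 0 < r) (k : ℕ) :
    Integrable (fun x : ℝ => x ^ k) (gammaMeasure a r) := by
  have hiff := integrable_withDensity_iff (μ := volume)
    (f := fun x => ENNReal.ofReal (gammaPDFReal a r x))
    ((measurable_gammaPDFReal a r).ennreal_ofReal)
    (ae_of_all _ fun x => ENNReal.ofReal_lt_top) (g := fun x : ℝ => x ^ k)
  rw [gammaMeasure]
  refine hiff.2 ?_
  have base : IntegrableOn (fun x : ℝ => x ^ k * (gammaPDF a r x).toReal) (Ioi 0) := by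
    have h0 : IntegrableOn
        (fun x : ℝ => (r ^ a / Gamma a) * (x ^ (a + k - 1) * Real.exp (-(r * x)))) (Ioi 0) :=
      (aux_integrableOn ha hr k).const_mul _
    apply h0.congr_fun ?_ measurableSet_Ioi
    intro x hx
    show _ = x ^ k * (ENNReal.ofReal (gammaPDFReal a r x)).toReal
    rw [ENNReal.toReal_ofReal (gammaPDFReal_nonneg ha hr x), mul_comm (x ^ k),
      pdf_mul_pow k hx]
  have hae : (fun x : ℝ => x ^ k * (gammaPDF a r x).toReal)
      =ᵐ[volume] (Ioi 0).indicator (fun x => x ^ k * (gammaPDF a r x).toReal) := by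
    filter_upwards [ae_ne_zero] with x hx
    rcases lt_or_gt_of_ne hx with h | h
    · rw [indicator_of_notMem (by simpa using h.le), gammaPDF_of_neg h]
      simp
    · rw [indicator_of_mem (mem_Ioi.2 h)]
  exact (base.integrable_indicator measurableSet_Ioi).congr hae.symm

lemma gammaMeasure_ae_pos {a r : ℝ} : ∀ᵐ x ∂(gammaMeasure a r), 0 < x := by
  rw [ae_iff]
  have hs : {x : ℝ | ¬ 0 < x} = Iic 0 := by ext x; simp
  rw [hs, gammaMeasure, withDensity_apply _ measurableSet_Iic,
    Measure.restrict_congr_set Iio_ae_eq_Iic.symm]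
  exact lintegral_gammaPDF_of_nonpos le_rfl


lemma main_bound (a : ℝ) (ha : 0 < a) (n : ℕ) (hn : 1 ≤ n) :
    |chiSqExp n (fun u => u / (u + n * a)) - 1 / (1 + a)| ≤ 3 / (2 * Real.sqrt n) := by
  set N : ℝ := (n : ℝ) with hNdef
  have hN : 1 ≤ N := by rw [hNdef]; exact_mod_cast hn
  have hN0 : 0 < N := by linarith
  have ha' : 0 < N / 2 := by linarith
  have hr : (0 : ℝ) < 1 / 2 := by norm_num
  have hGne : Gamma (N / 2) ≠ 0 := (Gamma_pos_of_pos ha').ne'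
  have hμ : chiSq n = gammaMeasure (N / 2) (1 / 2) := rfl
  haveI : IsProbabilityMeasure (chiSq n) := by
    rw [hμ]; exact isProbabilityMeasure_gammaMeasure ha' hr
  -- moments
  have hm1 : ∫ x, x ∂(chiSq n) = N := by
    have h := integral_pow_gammaMeasure ha' hr 1
    rw [← hμ] at h
    simp only [pow_one, Nat.cast_one] at h
    rw [h, Real.Gamma_add_one ha'.ne']
    field_simp
  have hm2 : ∫ x, x ^ 2 ∂(chiSq n) = N ^ 2 + 2 * N := by
    have h := integral_pow_gammaMeasure ha' hr 2
    rw [← hμ] at h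
    simp only [Nat.cast_ofNat] at h
    rw [h, show N / 2 + 2 = (N / 2 + 1) + 1 by ring,
      Real.Gamma_add_one (by positivity), Real.Gamma_add_one ha'.ne']
    field_simp
  have hi1 : Integrable (fun x : ℝ => x) (chiSq n) := by
    have h := integrable_pow_gammaMeasure ha' hr 1
    rw [← hμ] at h
    simpa using h
  have hi2 : Integrable (fun x : ℝ => x ^ 2) (chiSq n) := by
    have h := integrable_pow_gammaMeasure ha' hr 2
    rwa [← hμ] at h
  have hisq : Integrable (fun x : ℝ => (x - N) ^ 2) (chiSq n) := by
    have : (fun x : ℝ => (x - N) ^ 2)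
        = fun x => x ^ 2 - (2 * N) * x + N ^ 2 := by funext x; ring
    rw [this]
    exact (hi2.sub (hi1.const_mul _)).add (integrable_const _)
  have hvar : ∫ x, (x - N) ^ 2 ∂(chiSq n) = 2 * N := by
    have he : (fun x : ℝ => (x - N) ^ 2)
        = fun x => x ^ 2 - (2 * N) * x + N ^ 2 := by funext x; ring
    have hib : Integrable (fun x : ℝ => (2 * N) * x) (chiSq n) := hi1.const_mul _
    have hia : Integrable (fun x : ℝ => x ^ 2 - (2 * N) * x) (chiSq n) := hi2.sub hib
    rw [he, integral_add hia (integrable_const _),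
      integral_sub hi2 hib, integral_const_mul, integral_const,
      probReal_univ, smul_eq_mul, one_mul, hm1, hm2]
    ring
  have hpos : ∀ᵐ u ∂(chiSq n), 0 < u := by rw [hμ]; exact gammaMeasure_ae_pos
  have h1a : (0 : ℝ) < 1 + a := by linarith
  have hsq : 0 < Real.sqrt N := Real.sqrt_pos.2 hN0
  -- integrability of f
  have hfmeas : AEStronglyMeasurable (fun u : ℝ => u / (u + N * a)) (chiSq n) :=
    (measurable_id.div (measurable_id.add_const _)).aestronglyMeasurable
  have hfint : Integrable (fun u : ℝ => u / (u + N * a)) (chiSq n) := by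
    refine Integrable.mono' (integrable_const 1) hfmeas ?_
    filter_upwards [hpos] with u hu
    have hd : 0 < u + N * a := by positivity
    rw [Real.norm_eq_abs, abs_of_nonneg (div_nonneg hu.le hd.le), div_le_one hd]
    nlinarith
  -- pointwise bound
  have hbound : ∀ᵐ u ∂(chiSq n), ‖u / (u + N * a) - 1 / (1 + a)‖
      ≤ ((u - N) ^ 2 + N) / (2 * Real.sqrt N * N) := by
    filter_upwards [hpos] with u hu
    have hd : 0 < u + N * a := by positivity
    have h1 : u / (u + N * a) - 1 / (1 + a) = a * (u - N) / ((u + N * a) * (1 + a)) := by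
      field_simp
      ring
    have habs : |u - N| ≤ ((u - N) ^ 2 + N) / (2 * Real.sqrt N) := by
      rw [le_div_iff₀ (by positivity)]
      nlinarith [sq_nonneg (|u - N| - Real.sqrt N), sq_abs (u - N),
        Real.sq_sqrt hN0.le, abs_nonneg (u - N)]
    rw [Real.norm_eq_abs, h1, abs_div, abs_mul, abs_of_pos ha,
      abs_of_pos (mul_pos hd h1a)]
    calc a * |u - N| / ((u + N * a) * (1 + a))
        ≤ a * |u - N| / ((N * a) * (1 + a)) := by
          gcongr <;>
            nlinarith [mul_nonneg ha.le (abs_nonneg (u - N)), mul_pos hN0 ha]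
      _ = |u - N| / (N * (1 + a)) := by
          field_simp
      _ ≤ |u - N| / N := by
          gcongr <;> nlinarith [abs_nonneg (u - N)]
      _ ≤ (((u - N) ^ 2 + N) / (2 * Real.sqrt N)) / N := by gcongr
      _ = ((u - N) ^ 2 + N) / (2 * Real.sqrt N * N) := by rw [div_div]
  have hgint : Integrable (fun u : ℝ => ((u - N) ^ 2 + N) / (2 * Real.sqrt N * N)) (chiSq n) :=
    (hisq.add (integrable_const _)).div_const _
  have hkey := norm_integral_le_of_norm_le hgint
    (by filter_upwards [hbound] with u hu using hu :
      ∀ᵐ u ∂(chiSq n), ‖u / (u + N * a) - 1 / (1 + a)‖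
        ≤ ((u - N) ^ 2 + N) / (2 * Real.sqrt N * N))
  have hL : ∫ u, (u / (u + N * a) - 1 / (1 + a)) ∂(chiSq n)
      = chiSqExp n (fun u => u / (u + N * a)) - 1 / (1 + a) := by
    rw [integral_sub hfint (integrable_const _), integral_const, probReal_univ,
      smul_eq_mul, one_mul]
    rfl
  have hR : ∫ u, ((u - N) ^ 2 + N) / (2 * Real.sqrt N * N) ∂(chiSq n)
      = 3 / (2 * Real.sqrt N) := by
    rw [integral_div, integral_add hisq (integrable_const _), integral_const, probReal_univ,
      smul_eq_mul, one_mul, hvar]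
    rw [show 2 * N + N = 3 * N by ring]
    field_simp
  rw [hL, hR] at hkey
  rw [← Real.norm_eq_abs]
  exact hkey

lemma sqrt_nat_tendsto : Tendsto (fun n : ℕ => Real.sqrt n) atTop atTop := by
  rw [tendsto_atTop]
  intro b
  filter_upwards [eventually_ge_atTop (⌈b ^ 2⌉₊)] with n hn
  have h1 : b ^ 2 ≤ (n : ℝ) := le_trans (Nat.le_ceil _) (by exact_mod_cast hn)
  calc b ≤ |b| := le_abs_self b
    _ = Real.sqrt (b ^ 2) := (Real.sqrt_sq_eq_abs b).symm
    _ ≤ Real.sqrt n := Real.sqrt_le_sqrt h1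

theorem stmt_4 (a : ℝ) (ha : 0 < a) (σ2 τ2 : ℝ) (hσ2 : 0 < σ2) (hτ2 : 0 < τ2)
    (haeq : a = τ2 / σ2) :
    Tendsto (fun n : ℕ => chiSqExp n (fun u => u / (u + n * a))) atTop (nhds (1 / (1 + a))) ∧
    Tendsto (fun n : ℕ => chiSqExp n (fun u => (σ2 * u) / (σ2 * u + n * τ2))) atTop
      (nhds (σ2 / (σ2 + τ2))) := by
  have hzero : Tendsto (fun n : ℕ => 3 / (2 * Real.sqrt n)) atTop (nhds 0) :=
    Tendsto.div_atTop tendsto_const_nhds (sqrt_nat_tendsto.const_mul_atTop two_pos)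
  have key : Tendsto (fun n : ℕ => chiSqExp n (fun u => u / (u + n * a))) atTop
      (nhds (1 / (1 + a))) := by
    rw [← tendsto_sub_nhds_zero_iff]
    apply squeeze_zero_norm' ?_ hzero
    filter_upwards [eventually_ge_atTop 1] with n hn
    rw [Real.norm_eq_abs]
    exact main_bound a ha n hn
  refine ⟨key, ?_⟩
  have heq : ∀ n : ℕ, (fun u : ℝ => (σ2 * u) / (σ2 * u + n * τ2))
      = fun u : ℝ => u / (u + n * a) := by
    intro n
    funext u
    have h2 : σ2 * u + n * τ2 = σ2 * (u + n * a) := by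
      rw [haeq]
      field_simp
    rw [h2, mul_div_mul_left _ _ hσ2.ne']
  have hc : σ2 / (σ2 + τ2) = 1 / (1 + a) := by
    rw [haeq]
    rw [div_eq_div_iff (by linarith) (by rw [haeq] at ha; nlinarith)]
    field_simp
  simp only [heq, hc]
  exact key
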